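/- Let W ⊆ ℝ^d be a compact convex set with 0 ∈ W and ‖x − y‖ ≤ D for all x, y ∈ W, let g¹, …, g^T ∈ ℝ^d satisfy ‖g^t‖ ≤ G for all t, and let η > 0. Define ŵ¹ = 0 and ŵ^{t+1} = argmin_{w ∈ W} ⟨Σ_{k=1}^t g^k, w⟩ + (1/η)‖w‖² for t ≥ 1. Then for every w ∈ W, Σ_{t=1}^T ⟨g^t, ŵ^t − w⟩ ≤ ηG²T/2 + D²/η. -/
import Mathlib


open MeasureTheory Real
open scoped ENNReal NNReal BigOperators RealInnerProductSpace

private lemma ftrl_sum_Icc_one (f : ℕ → ℝ) (T : ℕ) :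
    ∑ t ∈ Finset.Icc 1 T, f t = ∑ i ∈ Finset.range T, f (i + 1) := by
  induction T with
  | zero => simp
  | succ n ih =>
      rw [Finset.sum_Icc_succ_top (Nat.succ_le_succ (Nat.zero_le n)), ih,
        Finset.sum_range_succ]

private lemma ftrl_scalar (η G r : ℝ) (hη : 0 < η) :
    G * r - 1 / (2 * η) * r ^ 2 ≤ η * G ^ 2 / 2 := by
  have hne : η ≠ 0 := ne_of_gt hη
  have expand : 1 / (2 * η) * (r - η * G) ^ 2
      = 1 / (2 * η) * r ^ 2 - G * r + η * G ^ 2 / 2 := by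
    field_simp
    ring
  have hpos : 0 ≤ 1 / (2 * η) * (r - η * G) ^ 2 := by positivity
  linarith [hpos, expand]

private lemma ftrl_strong_min {d : ℕ} {W : Set (EuclideanSpace ℝ (Fin d))}
    (hWconv : Convex ℝ W) (η : ℝ) (hη : 0 < η) (L : EuclideanSpace ℝ (Fin d))
    {x y : EuclideanSpace ℝ (Fin d)} (hx : x ∈ W) (hy : y ∈ W)
    (hmin : ∀ u ∈ W, ⟪L, x⟫ + (1 / η) * ‖x‖ ^ 2 ≤ ⟪L, u⟫ + (1 / η) * ‖u‖ ^ 2) :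
    ⟪L, x⟫ + (1 / η) * ‖x‖ ^ 2 + 1 / (2 * η) * ‖x - y‖ ^ 2
      ≤ ⟪L, y⟫ + (1 / η) * ‖y‖ ^ 2 := by
  have hm : (1 / 2 : ℝ) • x + (1 / 2 : ℝ) • y ∈ W :=
    hWconv hx hy (by norm_num) (by norm_num) (by norm_num)
  have h := hmin _ hm
  have hinner : ⟪L, (1 / 2 : ℝ) • x + (1 / 2 : ℝ) • y⟫
      = (1 / 2) * ⟪L, x⟫ + (1 / 2) * ⟪L, y⟫ := by
    rw [inner_add_right, real_inner_smul_right, real_inner_smul_right]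
  have hnorm : ‖(1 / 2 : ℝ) • x + (1 / 2 : ℝ) • y‖ ^ 2
      = (1 / 2) * ‖x‖ ^ 2 + (1 / 2) * ‖y‖ ^ 2 - (1 / 4) * ‖x - y‖ ^ 2 := by
    have h1 : ‖x + y‖ ^ 2 + ‖x - y‖ ^ 2 = 2 * ‖x‖ ^ 2 + 2 * ‖y‖ ^ 2 := by
      have ha := norm_add_sq_real x y
      have hb := norm_sub_sq_real x y
      linarith
    have h2 : (1 / 2 : ℝ) • x + (1 / 2 : ℝ) • y = (1 / 2 : ℝ) • (x + y) := by
      rw [smul_add]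
    rw [h2, norm_smul, Real.norm_eq_abs, abs_of_pos (by norm_num : (0:ℝ) < 1 / 2),
      mul_pow]
    linarith
  rw [hinner, hnorm] at h
  have hc : (1 : ℝ) / (2 * η) = (1 / η) / 2 := by ring
  have hdist : (1 / η) * ((1 / 2) * ‖x‖ ^ 2 + (1 / 2) * ‖y‖ ^ 2 - (1 / 4) * ‖x - y‖ ^ 2)
      = (1 / 2) * ((1 / η) * ‖x‖ ^ 2) + (1 / 2) * ((1 / η) * ‖y‖ ^ 2)
        - (1 / 4) * ((1 / η) * ‖x - y‖ ^ 2) := by ring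
  rw [hdist] at h
  have hc2 : 1 / (2 * η) * ‖x - y‖ ^ 2 = (1 / 2) * ((1 / η) * ‖x - y‖ ^ 2) := by ring
  rw [hc2]
  linarith

/-- FTRL with quadratic regularizer, linear losses. Let `W ⊆ ℝ^d` be a
compact convex set with `0 ∈ W` and `‖x − y‖ ≤ D` on `W`, let `‖g^t‖ ≤ G`, `η > 0`, and let
`wh¹ = 0`, `wh^{t+1} = argmin_{w ∈ W} ⟨Σ_{k=1}^t g^k, w⟩ + (1/η)‖w‖²`. Then for every `w ∈ W`,
`Σ_{t=1}^T ⟨g^t, wh^t − w⟩ ≤ ηG²T/2 + D²/η`. -/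
theorem ftrl_linear_regret
    {d T : ℕ} (W : Set (EuclideanSpace ℝ (Fin d)))
    (hWcpt : IsCompact W) (hWconv : Convex ℝ W)
    (hW0 : (0 : EuclideanSpace ℝ (Fin d)) ∈ W)
    (D G η : ℝ) (hη : 0 < η)
    (hdiam : ∀ x ∈ W, ∀ y ∈ W, ‖x - y‖ ≤ D)
    (g : ℕ → EuclideanSpace ℝ (Fin d))
    (hG : ∀ t ∈ Finset.Icc 1 T, ‖g t‖ ≤ G)
    (wh : ℕ → EuclideanSpace ℝ (Fin d)) (hwh1 : wh 1 = 0)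
    (hwhW : ∀ t ∈ Finset.Icc 1 T, wh (t + 1) ∈ W)
    (hwh : ∀ t ∈ Finset.Icc 1 T, ∀ u ∈ W,
      ⟪∑ k ∈ Finset.Icc 1 t, g k, wh (t + 1)⟫ + (1 / η) * ‖wh (t + 1)‖ ^ 2
        ≤ ⟪∑ k ∈ Finset.Icc 1 t, g k, u⟫ + (1 / η) * ‖u‖ ^ 2) :
    ∀ w ∈ W, ∑ t ∈ Finset.Icc 1 T, ⟪g t, wh t - w⟫ ≤ η * G ^ 2 * T / 2 + D ^ 2 / η := by
  intro w hw
  classical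
  set L : ℕ → EuclideanSpace ℝ (Fin d) := fun t => ∑ k ∈ Finset.Icc 1 t, g k with hLdef
  set F : ℕ → EuclideanSpace ℝ (Fin d) → ℝ :=
    fun t u => ⟪L t, u⟫ + (1 / η) * ‖u‖ ^ 2 with hFdef
  have hwh' : ∀ t ∈ Finset.Icc 1 T, ∀ u ∈ W, F t (wh (t + 1)) ≤ F t u := hwh
  -- membership of iterates
  have hwhW' : ∀ t ∈ Finset.Icc 1 T, wh t ∈ W := by
    intro t ht
    obtain ⟨h1, h2⟩ := Finset.mem_Icc.mp ht
    rcases Nat.exists_eq_succ_of_ne_zero (by omega : t ≠ 0) with ⟨s, rfl⟩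
    rcases Nat.eq_zero_or_pos s with h | h
    · subst h; simpa [hwh1] using hW0
    · exact hwhW s (Finset.mem_Icc.mpr ⟨h, by omega⟩)
  -- wh t minimizes F (t-1)
  have hmin : ∀ t ∈ Finset.Icc 1 T, ∀ u ∈ W, F (t - 1) (wh t) ≤ F (t - 1) u := by
    intro t ht u hu
    obtain ⟨h1, h2⟩ := Finset.mem_Icc.mp ht
    rcases Nat.exists_eq_succ_of_ne_zero (by omega : t ≠ 0) with ⟨s, rfl⟩
    simp only [Nat.succ_sub_one]
    rcases Nat.eq_zero_or_pos s with h | h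
    · subst h
      have : F 0 (wh 1) = 0 := by simp [hFdef, hLdef, hwh1]
      rw [this]
      have : F 0 u = (1 / η) * ‖u‖ ^ 2 := by simp [hFdef, hLdef]
      rw [this]
      positivity
    · exact hwh' s (Finset.mem_Icc.mpr ⟨h, by omega⟩) u hu
  -- decomposition of L
  have hLsplit : ∀ t ∈ Finset.Icc 1 T, ∀ u : EuclideanSpace ℝ (Fin d),
      ⟪L t, u⟫ = ⟪L (t - 1), u⟫ + ⟪g t, u⟫ := by
    intro t ht u
    obtain ⟨h1, h2⟩ := Finset.mem_Icc.mp ht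
    rcases Nat.exists_eq_succ_of_ne_zero (by omega : t ≠ 0) with ⟨s, rfl⟩
    have hLeq : L (s + 1) = L s + g (s + 1) := by
      simp only [hLdef]
      rw [Finset.sum_Icc_succ_top (Nat.succ_le_succ (Nat.zero_le s))]
    simp only [Nat.succ_sub_one]
    rw [hLeq, inner_add_left]
  -- per-step bound
  have hstep : ∀ t ∈ Finset.Icc 1 T,
      F t (wh t) - F t (wh (t + 1)) ≤ η * G ^ 2 / 2 := by
    intro t ht
    have hx : wh t ∈ W := hwhW' t ht
    have hy : wh (t + 1) ∈ W := hwhW t ht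
    have hsc := ftrl_strong_min hWconv η hη (L (t - 1)) hx hy (hmin t ht)
    have hCS : ⟪g t, wh t - wh (t + 1)⟫ ≤ G * ‖wh t - wh (t + 1)‖ := by
      calc ⟪g t, wh t - wh (t + 1)⟫ ≤ ‖g t‖ * ‖wh t - wh (t + 1)‖ :=
            real_inner_le_norm _ _
        _ ≤ G * ‖wh t - wh (t + 1)‖ :=
            mul_le_mul_of_nonneg_right (hG t ht) (norm_nonneg _)
    have hscal := ftrl_scalar η G ‖wh t - wh (t + 1)‖ hη
    have hF1 : F t (wh t) = ⟪L (t - 1), wh t⟫ + ⟪g t, wh t⟫ + (1 / η) * ‖wh t‖ ^ 2 := by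
      simp only [hFdef]; rw [hLsplit t ht]
    have hF2 : F t (wh (t + 1))
        = ⟪L (t - 1), wh (t + 1)⟫ + ⟪g t, wh (t + 1)⟫ + (1 / η) * ‖wh (t + 1)‖ ^ 2 := by
      simp only [hFdef]; rw [hLsplit t ht]
    have hsub : ⟪g t, wh t - wh (t + 1)⟫ = ⟪g t, wh t⟫ - ⟪g t, wh (t + 1)⟫ :=
      inner_sub_right _ _ _
    rw [hF1, hF2]
    linarith
  -- telescoping
  set A : ℕ → ℝ := fun t => F t (wh (t + 1)) with hAdef
  have hterm : ∀ t ∈ Finset.Icc 1 T,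
      ⟪g t, wh t - w⟫ = (F t (wh t) - F t (wh (t + 1))) + (A t - A (t - 1)) - ⟪g t, w⟫ := by
    intro t ht
    obtain ⟨h1, h2⟩ := Finset.mem_Icc.mp ht
    have ht1 : t - 1 + 1 = t := by omega
    have hA1 : A (t - 1) = F (t - 1) (wh t) := by
      simp only [hAdef, ht1]
    have hFt : F t (wh t) = F (t - 1) (wh t) + ⟪g t, wh t⟫ := by
      simp only [hFdef]; rw [hLsplit t ht]; ring
    have hsub : ⟪g t, wh t - w⟫ = ⟪g t, wh t⟫ - ⟪g t, w⟫ := inner_sub_right _ _ _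
    simp only [hAdef] at hA1 ⊢
    rw [hsub, hA1, hFt]
    ring
  rw [Finset.sum_congr rfl hterm]
  have hsplit : ∑ t ∈ Finset.Icc 1 T,
      ((F t (wh t) - F t (wh (t + 1))) + (A t - A (t - 1)) - ⟪g t, w⟫)
      = (∑ t ∈ Finset.Icc 1 T, (F t (wh t) - F t (wh (t + 1))))
        + (∑ t ∈ Finset.Icc 1 T, (A t - A (t - 1)))
        - ∑ t ∈ Finset.Icc 1 T, ⟪g t, w⟫ := by
    rw [Finset.sum_sub_distrib, Finset.sum_add_distrib]
  rw [hsplit]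
  -- telescoping sum
  have htel : ∑ t ∈ Finset.Icc 1 T, (A t - A (t - 1)) = A T - A 0 := by
    rw [ftrl_sum_Icc_one (fun t => A t - A (t - 1)) T]
    simp only [Nat.add_sub_cancel]
    exact Finset.sum_range_sub A T
  rw [htel]
  -- sum of inner products
  have hinW : ∑ t ∈ Finset.Icc 1 T, ⟪g t, w⟫ = ⟪L T, w⟫ := by
    simp only [hLdef]
    rw [sum_inner]
  rw [hinW]
  -- bound sum of steps
  have hbsum : ∑ t ∈ Finset.Icc 1 T, (F t (wh t) - F t (wh (t + 1)))
      ≤ T * (η * G ^ 2 / 2) := by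
    calc ∑ t ∈ Finset.Icc 1 T, (F t (wh t) - F t (wh (t + 1)))
        ≤ ∑ t ∈ Finset.Icc 1 T, (η * G ^ 2 / 2) := Finset.sum_le_sum hstep
      _ = T * (η * G ^ 2 / 2) := by
          rw [Finset.sum_const, Nat.card_Icc]
          simp [nsmul_eq_mul]
  -- A 0 = 0
  have hA0 : A 0 = 0 := by simp [hAdef, hFdef, hLdef, hwh1]
  -- A T ≤ F T w
  have hAT : A T ≤ F T w := by
    rcases Nat.eq_zero_or_pos T with h | h
    · subst h
      rw [hA0]
      have : F 0 w = (1 / η) * ‖w‖ ^ 2 := by simp [hFdef, hLdef]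
      rw [this]; positivity
    · exact hwh' T (Finset.mem_Icc.mpr ⟨h, le_refl T⟩) w hw
  -- final bound on ‖w‖
  have hwD : ‖w‖ ≤ D := by
    have := hdiam w hw 0 hW0
    simpa using this
  have hwD2 : ‖w‖ ^ 2 ≤ D ^ 2 := by
    have h0 : 0 ≤ ‖w‖ := norm_nonneg _
    nlinarith
  have hfinal : (1 / η) * ‖w‖ ^ 2 ≤ D ^ 2 / η := by
    have hd : D ^ 2 / η = (1 / η) * D ^ 2 := by ring
    rw [hd]
    exact mul_le_mul_of_nonneg_left hwD2 (by positivity)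
  have hFTw : F T w = ⟪L T, w⟫ + (1 / η) * ‖w‖ ^ 2 := rfl
  rw [hFTw] at hAT
  have h2 : η * G ^ 2 * T / 2 = T * (η * G ^ 2 / 2) := by ring
  rw [h2]
  clear_value A F L
  linarith [hbsum, hAT, hA0, hfinal]
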